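/- Let (M_n) be positive integers with M_{n+1} ≥ q·M_n for some q > 1, and let f : ℝ → ℝ be one-periodic of bounded variation with V(f) ≤ 1 and mean zero. Then there is a constant C depending only on q such that ∫_{[0,1)} (Σ_{n=1}^{N} f(M_n x))² dx ≤ C·(‖f‖₂² + ‖f‖₂)·N for all N. -/

import Mathlib

open Real MeasureTheory Set

lemma evar_split (f : ℝ → ℝ) (s : Set ℝ) (c : ℝ) (D : ENNReal)
    (hD : ∀ x ∈ s, x < c → ∀ y ∈ s, c ≤ y → edist (f x) (f y) ≤ D) :
    eVariationOn f s ≤ eVariationOn f (s ∩ Set.Iio c) + eVariationOn f (s ∩ Set.Ici c) + D := by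
  rw [eVariationOn]
  refine iSup_le ?_
  rintro ⟨n, u, hu, us⟩
  dsimp only
  by_cases hex : ∃ i, c ≤ u i
  · set k := Nat.find hex with hk
    have hck : c ≤ u k := Nat.find_spec hex
    have hlt : ∀ j, j < k → u j < c := fun j hj => lt_of_not_ge (Nat.find_min hex hj)
    have hge : ∀ j, k ≤ j → c ≤ u j := fun j hj => hck.trans (hu hj)
    rcases Nat.eq_zero_or_pos k with hk0 | hk0
    · -- all u i ≥ c
      have : (∑ i ∈ Finset.range n, edist (f (u (i + 1))) (f (u i))) ≤
          eVariationOn f (s ∩ Set.Ici c) :=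
        eVariationOn.sum_le (f := f) (n := n) hu (fun i => ⟨us i, hge i (hk0 ▸ Nat.zero_le i)⟩)
      calc (∑ i ∈ Finset.range n, edist (f (u (i + 1))) (f (u i)))
          ≤ eVariationOn f (s ∩ Set.Ici c) := this
        _ ≤ _ := le_add_self.trans (le_add_right le_rfl) |>.trans le_rfl
    · rcases le_or_gt k n with hkn | hkn
      · -- decompose
        have e1 : (∑ i ∈ Finset.range n, edist (f (u (i + 1))) (f (u i))) =
            (∑ i ∈ Finset.range (k-1), edist (f (u (i + 1))) (f (u i))) +
            edist (f (u k)) (f (u (k-1))) +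
            (∑ i ∈ Finset.Ico k n, edist (f (u (i + 1))) (f (u i))) := by
          rw [Finset.range_eq_Ico, ← Finset.sum_Ico_consecutive _ (Nat.zero_le (k-1))
            (le_trans (Nat.sub_le k 1) hkn), ← Finset.sum_Ico_consecutive _
            (Nat.sub_le k 1 : k - 1 ≤ k) hkn]
          have hk1 : k - 1 + 1 = k := Nat.succ_pred_eq_of_pos hk0
          have hmid : ∑ i ∈ Finset.Ico (k-1) k, edist (f (u (i + 1))) (f (u i))
              = edist (f (u k)) (f (u (k-1))) := by
            have h2 : Finset.Ico (k-1) k = {k-1} := by rw [← Nat.Ico_succ_singleton, hk1]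
            rw [h2, Finset.sum_singleton, hk1]
          rw [hmid, add_assoc, Finset.range_eq_Ico]
        rw [e1]
        have hpre : (∑ i ∈ Finset.range (k-1), edist (f (u (i + 1))) (f (u i))) ≤
            eVariationOn f (s ∩ Set.Iio c) := by
          set v : ℕ → ℝ := fun i => u (min i (k-1)) with hv
          have hvm : Monotone v := fun i j hij => hu (min_le_min hij le_rfl)
          have hvs : ∀ i, v i ∈ s ∩ Set.Iio c :=
            fun i => ⟨us _, hlt _ (lt_of_le_of_lt (min_le_right i (k-1)) (Nat.pred_lt_of_lt hk0))⟩
          have hcg : ∀ i ∈ Finset.range (k-1), edist (f (u (i + 1))) (f (u i))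
              = edist (f (v (i + 1))) (f (v i)) := by
            intro i hi
            rw [Finset.mem_range] at hi
            simp [hv, min_eq_left hi.le, min_eq_left (Nat.succ_le_of_lt hi)]
          rw [Finset.sum_congr rfl hcg]
          exact eVariationOn.sum_le (f := f) (n := k-1) hvm hvs
        have hcross : edist (f (u k)) (f (u (k-1))) ≤ D := by
          rw [edist_comm]
          exact hD (u (k-1)) (us _) (hlt _ (Nat.pred_lt_of_lt hk0)) (u k) (us _) hck
        have hsuf : (∑ i ∈ Finset.Ico k n, edist (f (u (i + 1))) (f (u i))) ≤
            eVariationOn f (s ∩ Set.Ici c) := by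
          rw [Finset.sum_Ico_eq_sum_range]
          set w : ℕ → ℝ := fun i => u (k + min i (n-k)) with hw
          have hwm : Monotone w := fun i j hij => hu (by omega)
          have hws : ∀ i, w i ∈ s ∩ Set.Ici c :=
            fun i => ⟨us _, hge _ (Nat.le_add_right _ _)⟩
          have hcg : ∀ i ∈ Finset.range (n-k), edist (f (u (k + i + 1))) (f (u (k + i)))
              = edist (f (w (i + 1))) (f (w i)) := by
            intro i hi
            rw [Finset.mem_range] at hi
            have h1 : min i (n-k) = i := min_eq_left hi.le
            have h2 : min (i+1) (n-k) = i + 1 := min_eq_left (Nat.succ_le_of_lt hi)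
            simp only [hw, h1, h2]
            congr 2 <;> omega
          calc ∑ i ∈ Finset.range (n - k), edist (f (u (k + i + 1))) (f (u (k + i)))
              = ∑ i ∈ Finset.range (n - k), edist (f (w (i + 1))) (f (w i)) :=
                Finset.sum_congr rfl hcg
            _ ≤ _ := eVariationOn.sum_le (f := f) (n := n-k) hwm hws
        calc (∑ i ∈ Finset.range (k-1), edist (f (u (i + 1))) (f (u i))) +
              edist (f (u k)) (f (u (k-1))) +
              (∑ i ∈ Finset.Ico k n, edist (f (u (i + 1))) (f (u i)))
            = ((∑ i ∈ Finset.range (k-1), edist (f (u (i + 1))) (f (u i))) +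
              (∑ i ∈ Finset.Ico k n, edist (f (u (i + 1))) (f (u i)))) +
              edist (f (u k)) (f (u (k-1))) := by rw [add_right_comm]
          _ ≤ eVariationOn f (s ∩ Set.Iio c) + eVariationOn f (s ∩ Set.Ici c) + D :=
              add_le_add (add_le_add hpre hsuf) hcross
      · -- k > n : all relevant u i (i ≤ n) < c
        have : (∑ i ∈ Finset.range n, edist (f (u (i + 1))) (f (u i))) ≤
            eVariationOn f (s ∩ Set.Iio c) := by
          set v : ℕ → ℝ := fun i => u (min i n) with hv
          have hvm : Monotone v := fun i j hij => hu (min_le_min hij le_rfl)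
          have hvs : ∀ i, v i ∈ s ∩ Set.Iio c :=
            fun i => ⟨us _, hlt _ (lt_of_le_of_lt (min_le_right i n) hkn)⟩
          have : ∀ i ∈ Finset.range n, edist (f (u (i + 1))) (f (u i))
              = edist (f (v (i + 1))) (f (v i)) := by
            intro i hi
            rw [Finset.mem_range] at hi
            simp [hv, min_eq_left hi.le, min_eq_left (Nat.succ_le_of_lt hi)]
          rw [Finset.sum_congr rfl this]
          exact eVariationOn.sum_le (f := f) (n := n) hvm hvs
        exact this.trans (le_add_right (le_add_right le_rfl))
  · push_neg at hex
    have : (∑ i ∈ Finset.range n, edist (f (u (i + 1))) (f (u i))) ≤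
        eVariationOn f (s ∩ Set.Iio c) :=
      eVariationOn.sum_le (f := f) (n := n) hu (fun i => ⟨us i, hex i⟩)
    exact this.trans (le_add_right (le_add_right le_rfl))

section
variable {f : ℝ → ℝ}

lemma per_nat (hper : ∀ x : ℝ, f (x + 1) = f x) (m : ℕ) (x : ℝ) : f (x + m) = f x := by
  induction m with
  | zero => simp
  | succ k ih =>
    have h : x + (k+1 : ℕ) = (x + k) + 1 := by push_cast; ring
    rw [h, hper, ih]

lemma per_fract (hper : ∀ x : ℝ, f (x + 1) = f x) (x : ℝ) : f (Int.fract x) = f x := by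
  have hp : Function.Periodic f 1 := hper
  have h := hp.sub_int_mul_eq (x := x) (n := ⌊x⌋)
  rw [mul_one] at h
  rw [show Int.fract x = x - ⌊x⌋ from rfl]
  exact h

lemma edist_le_var (hper : ∀ x : ℝ, f (x + 1) = f x) (x y : ℝ) :
    edist (f x) (f y) ≤ eVariationOn f (Set.Ico 0 1) := by
  rw [← per_fract hper x, ← per_fract hper y]
  exact eVariationOn.edist_le f ⟨Int.fract_nonneg x, Int.fract_lt_one x⟩
    ⟨Int.fract_nonneg y, Int.fract_lt_one y⟩

lemma evar_shift (hper : ∀ x : ℝ, f (x + 1) = f x) (k : ℕ) :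
    eVariationOn f (Set.Ico (k:ℝ) ((k:ℝ)+1)) = eVariationOn f (Set.Ico 0 1) := by
  have hφ : MonotoneOn (fun x : ℝ => x + k) (Set.Ico (0:ℝ) 1) :=
    fun x _ y _ h => by simpa using h
  have h1 := eVariationOn.comp_eq_of_monotoneOn f (fun x : ℝ => x + k) hφ
  have h2 : f ∘ (fun x : ℝ => x + k) = f := by
    funext x
    simp only [Function.comp_apply]
    exact per_nat hper k x
  have h3 : (fun x : ℝ => x + k) '' Set.Ico 0 1 = Set.Ico (k:ℝ) ((k:ℝ)+1) := by
    rw [Set.image_add_const_Ico, zero_add, add_comm]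
  rw [h2, h3] at h1
  exact h1.symm

lemma evar_Ico_nat_le (hper : ∀ x : ℝ, f (x + 1) = f x)
    (hvar : eVariationOn f (Set.Ico 0 1) ≤ 1) (a : ℕ) :
    eVariationOn f (Set.Ico (0:ℝ) (a:ℝ)) ≤ 2 * a := by
  induction a with
  | zero =>
    simp only [Nat.cast_zero, Set.Ico_self, mul_zero]
    exact le_of_eq (eVariationOn.subsingleton f (by simp))
  | succ a ih =>
    have hsplit := evar_split f (Set.Ico (0:ℝ) ((a:ℕ)+1:ℕ)) (a:ℝ) 1
      (fun x _ _ y _ _ => (edist_le_var hper x y).trans hvar)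
    have e1 : Set.Ico (0:ℝ) (((a:ℕ)+1:ℕ):ℝ) ∩ Set.Iio (a:ℝ) = Set.Ico (0:ℝ) (a:ℝ) := by
      ext x; simp only [Set.mem_inter_iff, Set.mem_Ico, Set.mem_Iio]
      push_cast
      constructor
      · rintro ⟨⟨h1, _⟩, h3⟩; exact ⟨h1, h3⟩
      · rintro ⟨h1, h2⟩; exact ⟨⟨h1, by linarith⟩, h2⟩
    have e2 : Set.Ico (0:ℝ) (((a:ℕ)+1:ℕ):ℝ) ∩ Set.Ici (a:ℝ) = Set.Ico (a:ℝ) ((a:ℝ)+1) := by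
      ext x; simp only [Set.mem_inter_iff, Set.mem_Ico, Set.mem_Ici]
      push_cast
      constructor
      · rintro ⟨⟨_, h2⟩, h3⟩; exact ⟨h3, by linarith⟩
      · rintro ⟨h1, h2⟩; exact ⟨⟨le_trans (Nat.cast_nonneg a) h1, by linarith⟩, h1⟩
    rw [e1, e2, evar_shift hper a] at hsplit
    calc eVariationOn f (Set.Ico (0:ℝ) (((a:ℕ)+1:ℕ):ℝ))
        ≤ eVariationOn f (Set.Ico (0:ℝ) (a:ℝ)) + eVariationOn f (Set.Ico 0 1) + 1 := hsplit
      _ ≤ 2 * a + 1 + 1 := add_le_add (add_le_add ih hvar) le_rfl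
      _ = 2 * ((a:ℕ)+1:ℕ) := by push_cast; ring

lemma evar_sum_adjacent (f : ℝ → ℝ) (c : ℕ → ℝ) (hc : Monotone c) (b : ℕ) :
    ∑ i ∈ Finset.range b, eVariationOn f (Set.Ico (c i) (c (i+1))) ≤
      eVariationOn f (Set.Ico (c 0) (c b)) := by
  induction b with
  | zero => simp
  | succ b ih =>
    rw [Finset.sum_range_succ]
    have h1 : eVariationOn f (Set.Ico (c 0) (c b)) + eVariationOn f (Set.Ico (c b) (c (b+1))) ≤
        eVariationOn f (Set.Ico (c 0) (c b) ∪ Set.Ico (c b) (c (b+1))) :=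
      eVariationOn.add_le_union f (fun x hx y hy => le_trans hx.2.le hy.1)
    have h2 : Set.Ico (c 0) (c b) ∪ Set.Ico (c b) (c (b+1)) ⊆ Set.Ico (c 0) (c (b+1)) := by
      rintro x (hx | hx)
      · exact ⟨hx.1, lt_of_lt_of_le hx.2 (hc (Nat.le_succ b))⟩
      · exact ⟨le_trans (hc (Nat.zero_le b)) hx.1, hx.2⟩
    exact (add_le_add ih le_rfl).trans (h1.trans (eVariationOn.mono f h2))

lemma int_of_bdd {g : ℝ → ℝ} (hg : Measurable g) (C : ℝ) (hC : ∀ x, |g x| ≤ C)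
    (t₁ t₂ : ℝ) : IntervalIntegrable g volume t₁ t₂ := by
  rw [intervalIntegrable_iff]
  refine MeasureTheory.Integrable.mono' (g := fun _ => C) (integrableOn_const measure_Ioc_lt_top.ne)
    hg.aestronglyMeasurable.restrict (ae_of_all _ fun x => ?_)
  simpa [Real.norm_eq_abs] using hC x

lemma block_integral {g : ℝ → ℝ} (hg : Measurable g) (C : ℝ) (hC : ∀ x, |g x| ≤ C)
    (hper : ∀ x, g (x + 1) = g x) {b : ℕ} (hb : 0 < b) (i : ℕ) :
    (∫ x in ((i:ℝ)/b)..(((i:ℝ)+1)/b), g ((b:ℝ) * x)) = (1/b) * ∫ x in (0:ℝ)..1, g x := by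
  have hbne : (b:ℝ) ≠ 0 := Nat.cast_ne_zero.mpr hb.ne'
  rw [intervalIntegral.integral_comp_mul_left g hbne]
  have e1 : (b:ℝ) * ((i:ℝ)/b) = (i:ℝ) := by field_simp
  have e2 : (b:ℝ) * (((i:ℝ)+1)/b) = (i:ℝ)+1 := by field_simp
  rw [e1, e2]
  have hp : Function.Periodic g 1 := hper
  rw [hp.intervalIntegral_add_eq (i:ℝ) 0, zero_add, smul_eq_mul, one_div]

lemma geom_tail (r : ℝ) (h0 : 0 ≤ r) (h1 : r < 1) (N : ℕ) :
    ∑ d ∈ Finset.Icc 1 N, r ^ d ≤ r / (1 - r) := by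
  have hr1 : r ≠ 1 := ne_of_lt h1
  have hlt : 0 < 1 - r := by linarith
  have hp : 0 ≤ r^(N+1) := pow_nonneg h0 _
  have e : Finset.Icc 1 N = (Finset.range (N+1)).erase 0 := by
    ext d; simp only [Finset.mem_Icc, Finset.mem_erase, Finset.mem_range]; omega
  have e2 : (1:ℝ) + ∑ d ∈ (Finset.range (N+1)).erase 0, r^d = ∑ d ∈ Finset.range (N+1), r^d := by
    have := Finset.add_sum_erase (Finset.range (N+1)) (fun d => r^d)
      (a := 0) (by simp)
    simpa using this
  have e3 : ∑ d ∈ Finset.range (N+1), r ^ d = (r^(N+1) - 1)/(r - 1) := geom_sum_eq hr1 (N+1)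
  rw [e]
  have h2 : r - 1 ≠ 0 := sub_ne_zero.mpr hr1
  have h3 : 1 - r ≠ 0 := ne_of_gt hlt
  have e4 : ∑ d ∈ (Finset.range (N+1)).erase 0, r^d = (r - r^(N+1))/(1 - r) := by
    rw [e3] at e2
    have k1 : (r^(N+1) - 1)/(r - 1) = (1 - r^(N+1))/(1 - r) := by
      rw [div_eq_div_iff h2 h3]; ring
    have k2 : (1 - r^(N+1))/(1 - r) - 1 = (r - r^(N+1))/(1 - r) := by
      rw [div_sub_one h3]
      congr 1
      ring
    linarith [e2, k1, k2]
  rw [e4]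
  gcongr
  linarith

set_option maxHeartbeats 1000000 in
/-- Second moment bound for lacunary sums: for a Hadamard lacunary sequence with ratio
`q > 1` and a one-periodic, mean-zero function of total variation at most `1`,
`∫₀¹ (Σ_{n=1}^N f(M_n x))² dx ≤ C(‖f‖₂² + ‖f‖₂)·N` with `C` depending only on `q`. -/
theorem stmt_9 (q : ℝ) (hq : 1 < q) :
    ∃ C > (0 : ℝ), ∀ (M : ℕ → ℕ), (∀ n, 0 < M n) → (∀ n, q * M n ≤ M (n + 1)) →
      ∀ f : ℝ → ℝ, Measurable f →
        (∀ x : ℝ, f (x + 1) = f x) →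
        eVariationOn f (Set.Ico (0 : ℝ) 1) ≤ 1 →
        (∫ x in (0:ℝ)..1, f x) = 0 →
        ∀ N : ℕ,
          (∫ x in (0:ℝ)..1, (∑ n ∈ Finset.Icc 1 N, f ((M n : ℝ) * x)) ^ 2) ≤
            C * ((∫ x in (0:ℝ)..1, f x ^ 2) + Real.sqrt (∫ x in (0:ℝ)..1, f x ^ 2)) * N := by
  have hq0 : (0:ℝ) < q - 1 := by linarith
  refine ⟨1 + 4/(q-1), by positivity, ?_⟩
  intro M hMpos hMlac f hmeas hper hvar hmean N
  set I2 := ∫ x in (0:ℝ)..1, f x ^ 2 with hI2def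
  set L := Real.sqrt I2 with hLdef
  have hI2 : 0 ≤ I2 := intervalIntegral.integral_nonneg (by norm_num) (fun x _ => sq_nonneg _)
  have hL : 0 ≤ L := Real.sqrt_nonneg _
  -- boundedness of f
  obtain ⟨B, hB0, hB⟩ : ∃ B : ℝ, 0 ≤ B ∧ ∀ x, |f x| ≤ B := by
    refine ⟨|f 0| + 1, by positivity, fun x => ?_⟩
    have h := (edist_le_var hper x 0).trans hvar
    rw [edist_dist] at h
    have hd : dist (f x) (f 0) ≤ 1 := ENNReal.ofReal_le_one.mp h
    rw [Real.dist_eq] at hd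
    have h2 := abs_sub_abs_le_abs_sub (f x) (f 0)
    linarith
  have hintf : ∀ t₁ t₂ : ℝ, IntervalIntegrable f volume t₁ t₂ :=
    fun t₁ t₂ => int_of_bdd hmeas B hB t₁ t₂
  have habs_int : ∀ t₁ t₂ : ℝ, IntervalIntegrable (fun x => |f x|) volume t₁ t₂ :=
    fun _ _ => int_of_bdd hmeas.abs B (fun x => by simpa using hB x) _ _
  have hsq_int : ∀ t₁ t₂ : ℝ, IntervalIntegrable (fun x => f x ^ 2) volume t₁ t₂ :=
    fun _ _ => int_of_bdd (hmeas.pow_const 2) (B^2)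
      (fun x => by rw [abs_pow]; exact pow_le_pow_left₀ (abs_nonneg _) (hB x) 2) _ _
  -- L1 norm bounded by L2 norm
  set A := ∫ x in (0:ℝ)..1, |f x| with hAdef
  have hA0 : 0 ≤ A := intervalIntegral.integral_nonneg (by norm_num) (fun x _ => abs_nonneg _)
  have hAL : A ≤ L := by
    have h0 : (0:ℝ) ≤ ∫ x in (0:ℝ)..1, (|f x| - A)^2 :=
      intervalIntegral.integral_nonneg (by norm_num) (fun x _ => sq_nonneg _)
    have hexp : (∫ x in (0:ℝ)..1, (|f x| - A)^2) = I2 - 2*A*A + A^2 := by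
      have e : (fun x => (|f x| - A)^2) = fun x => (f x^2 - (2*A)*|f x|) + A^2 := by
        funext x; rw [sub_sq, sq_abs]; ring
      rw [e, intervalIntegral.integral_add
            ((hsq_int 0 1).sub ((habs_int 0 1).const_mul (2*A))) intervalIntegrable_const,
          intervalIntegral.integral_sub (hsq_int 0 1) ((habs_int 0 1).const_mul (2*A)),
          intervalIntegral.integral_const_mul, intervalIntegral.integral_const]
      simp only [smul_eq_mul, sub_zero, one_mul, ← hI2def, ← hAdef]
    rw [hexp] at h0
    have hAsq : A^2 ≤ I2 := by nlinarith
    exact Real.le_sqrt_of_sq_le hAsq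
  -- the correlation bound
  have corr : ∀ a b : ℕ, 0 < a → 0 < b → a ≤ b →
      |∫ x in (0:ℝ)..1, f ((a:ℝ) * x) * f ((b:ℝ) * x)| ≤ 2 * a / b * L := by
    intro a b ha hb hab
    have haR : (0:ℝ) < a := Nat.cast_pos.mpr ha
    have hbR : (0:ℝ) < b := Nat.cast_pos.mpr hb
    set c : ℕ → ℝ := fun i => (i:ℝ)/b with hcdef
    have hcmono : Monotone c := fun i j hij =>
      (div_le_div_iff_of_pos_right hbR).mpr (Nat.cast_le.mpr hij)
    have hc0 : c 0 = 0 := by simp [hcdef]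
    have hcb : c b = 1 := by simp [hcdef, hbR.ne']
    have hma : Measurable (fun x : ℝ => f ((a:ℝ)*x)) := hmeas.comp (measurable_const_mul _)
    have hmb : Measurable (fun x : ℝ => f ((b:ℝ)*x)) := hmeas.comp (measurable_const_mul _)
    have hintb : ∀ t₁ t₂ : ℝ, IntervalIntegrable (fun x => f ((b:ℝ)*x)) volume t₁ t₂ :=
      fun _ _ => int_of_bdd hmb B (fun x => hB _) _ _
    have habsb : ∀ t₁ t₂ : ℝ, IntervalIntegrable (fun x => |f ((b:ℝ)*x)|) volume t₁ t₂ :=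
      fun _ _ => int_of_bdd hmb.abs B (fun x => by simpa using hB _) _ _
    have hPint : ∀ t₁ t₂ : ℝ, IntervalIntegrable
        (fun x => f ((a:ℝ)*x) * f ((b:ℝ)*x)) volume t₁ t₂ :=
      fun _ _ => int_of_bdd (hma.mul hmb) (B*B)
        (fun x => by simp only [Pi.mul_apply, Function.comp_apply]; rw [abs_mul]; exact mul_le_mul (hB _) (hB _) (abs_nonneg _) hB0) _ _
    have hsum : ∑ i ∈ Finset.range b, (∫ x in c i..c (i+1), f ((a:ℝ)*x) * f ((b:ℝ)*x))
        = ∫ x in (0:ℝ)..1, f ((a:ℝ)*x) * f ((b:ℝ)*x) := by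
      have h := intervalIntegral.sum_integral_adjacent_intervals (a := c) (μ := volume)
        (n := b) (fun k _ => hPint _ _)
      rw [hc0, hcb] at h
      exact h
    have hVtop : eVariationOn f (Set.Ico (0:ℝ) (a:ℝ)) ≤ 2*a := evar_Ico_nat_le hper hvar a
    set V : ℕ → ENNReal := fun i => eVariationOn f (Set.Ico ((a:ℝ)*c i) ((a:ℝ)*c (i+1)))
      with hVdef
    have hVle : ∀ i, i < b → V i ≤ 2*a := by
      intro i hi
      refine (eVariationOn.mono f ?_).trans hVtop
      intro x hx
      have hc1 : c (i+1) ≤ 1 := by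
        rw [hcdef, div_le_one hbR]
        exact_mod_cast Nat.succ_le_of_lt hi
      constructor
      · exact le_trans (by positivity) hx.1
      · exact lt_of_lt_of_le hx.2 (mul_le_of_le_one_right haR.le hc1)
    have h2atop : (2*(a:ENNReal)) ≠ ⊤ := by
      simp [ENNReal.mul_ne_top]
    have hVne : ∀ i, i < b → V i ≠ ⊤ := fun i hi => ne_top_of_le_ne_top h2atop (hVle i hi)
    have hVsum : ∑ i ∈ Finset.range b, (V i).toReal ≤ 2*a := by
      have h1 : ∑ i ∈ Finset.range b, V i ≤
          eVariationOn f (Set.Ico ((a:ℝ)*c 0) ((a:ℝ)*c b)) :=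
        evar_sum_adjacent f (fun i => (a:ℝ)*c i)
          (fun i j hij => mul_le_mul_of_nonneg_left (hcmono hij) haR.le) b
      rw [hc0, hcb, mul_zero, mul_one] at h1
      have h2 : ∑ i ∈ Finset.range b, V i ≤ 2*(a:ENNReal) := h1.trans hVtop
      calc ∑ i ∈ Finset.range b, (V i).toReal
          = (∑ i ∈ Finset.range b, V i).toReal :=
            (ENNReal.toReal_sum (fun i hi => hVne i (Finset.mem_range.mp hi))).symm
        _ ≤ (2*(a:ENNReal)).toReal := ENNReal.toReal_mono h2atop h2
        _ = 2*a := by simp [ENNReal.toReal_mul]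
    have hcsucc : ∀ i : ℕ, c (i+1) = ((i:ℝ)+1)/b := by
      intro i; rw [hcdef]; push_cast; ring_nf
    have hblockf : ∀ i : ℕ, (∫ x in c i..c (i+1), f ((b:ℝ)*x)) = 0 := by
      intro i
      rw [show c i = (i:ℝ)/b from rfl, hcsucc i, block_integral hmeas B hB hper hb i, hmean,
        mul_zero]
    have hblockabs : ∀ i : ℕ, (∫ x in c i..c (i+1), |f ((b:ℝ)*x)|) = (1/b) * A := by
      intro i
      rw [show c i = (i:ℝ)/b from rfl, hcsucc i,
        block_integral hmeas.abs B (fun x => by simpa using hB x)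
          (fun x => by rw [hper]) hb i, ← hAdef]
    have hstep : ∀ i, i < b →
        |∫ x in c i..c (i+1), f ((a:ℝ)*x) * f ((b:ℝ)*x)| ≤ (V i).toReal * ((1/b)*A) := by
      intro i hi
      set K := f ((a:ℝ) * c i) with hKdef
      have hcle : c i ≤ c (i+1) := hcmono (Nat.le_succ i)
      have hint1 : ∀ t₁ t₂ : ℝ, IntervalIntegrable
          (fun x => (f ((a:ℝ)*x) - K) * f ((b:ℝ)*x)) volume t₁ t₂ :=
        fun _ _ => int_of_bdd ((hma.sub measurable_const).mul hmb) ((B+|K|)*B)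
          (fun x => by
            simp only [Pi.mul_apply, Pi.sub_apply]
            rw [abs_mul]
            exact mul_le_mul ((abs_sub _ _).trans (add_le_add (hB _) le_rfl)) (hB _)
              (abs_nonneg _) (by positivity)) _ _
      have hsplit : (∫ x in c i..c (i+1), f ((a:ℝ)*x) * f ((b:ℝ)*x))
          = (∫ x in c i..c (i+1), (f ((a:ℝ)*x) - K) * f ((b:ℝ)*x))
            + K * ∫ x in c i..c (i+1), f ((b:ℝ)*x) := by
        have e : (fun x => f ((a:ℝ)*x) * f ((b:ℝ)*x))
            = fun x => ((f ((a:ℝ)*x) - K) * f ((b:ℝ)*x)) + K * f ((b:ℝ)*x) := by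
          funext x; ring
        rw [e, intervalIntegral.integral_add (hint1 _ _) ((hintb _ _).const_mul K),
          intervalIntegral.integral_const_mul]
      rw [hsplit, hblockf i, mul_zero, add_zero]
      have hclt : c i < c (i+1) := by
        rw [hcdef, div_lt_div_iff₀ hbR hbR]
        have : (i:ℝ) < (i:ℝ)+1 := by linarith
        push_cast
        nlinarith
      have hptwise : ∀ x ∈ Set.Ico (c i) (c (i+1)), |f ((a:ℝ)*x) - K| ≤ (V i).toReal := by
        intro x hx
        have hmem1 : (a:ℝ)*x ∈ Set.Ico ((a:ℝ)*c i) ((a:ℝ)*c (i+1)) :=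
          ⟨mul_le_mul_of_nonneg_left hx.1 haR.le, (mul_lt_mul_iff_right₀ haR).mpr hx.2⟩
        have hmem2 : (a:ℝ)*c i ∈ Set.Ico ((a:ℝ)*c i) ((a:ℝ)*c (i+1)) :=
          ⟨le_rfl, (mul_lt_mul_iff_right₀ haR).mpr hclt⟩
        have hedist := eVariationOn.edist_le f hmem1 hmem2
        rw [edist_dist] at hedist
        have h3 := ENNReal.toReal_mono (hVne i hi) hedist
        rwa [ENNReal.toReal_ofReal dist_nonneg, Real.dist_eq] at h3
      calc |∫ x in c i..c (i+1), (f ((a:ℝ)*x) - K) * f ((b:ℝ)*x)|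
          ≤ ∫ x in c i..c (i+1), |(f ((a:ℝ)*x) - K) * f ((b:ℝ)*x)| :=
            intervalIntegral.abs_integral_le_integral_abs hcle
        _ ≤ ∫ x in c i..c (i+1), (V i).toReal * |f ((b:ℝ)*x)| := by
            refine intervalIntegral.integral_mono_ae_restrict hcle ((hint1 _ _).abs)
              ((habsb _ _).const_mul _) ?_
            have h1 : ∀ᵐ (x:ℝ) ∂(volume.restrict (Set.Icc (c i) (c (i+1)))),
                x ≠ c (i+1) := by
              apply MeasureTheory.ae_restrict_of_ae
              rw [MeasureTheory.ae_iff]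
              have : {x : ℝ | ¬ x ≠ c (i+1)} = {c (i+1)} := by ext y; simp
              rw [this]
              exact Real.volume_singleton
            have h2 := MeasureTheory.ae_restrict_mem (μ := volume)
              (measurableSet_Icc : MeasurableSet (Set.Icc (c i) (c (i+1))))
            filter_upwards [h1, h2] with x hx1 hx2
            rw [abs_mul]
            exact mul_le_mul_of_nonneg_right
              (hptwise x ⟨hx2.1, lt_of_le_of_ne hx2.2 hx1⟩) (abs_nonneg _)
        _ = (V i).toReal * ((1/b)*A) := by
            rw [intervalIntegral.integral_const_mul, hblockabs i]
    calc |∫ x in (0:ℝ)..1, f ((a:ℝ)*x) * f ((b:ℝ)*x)|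
        = |∑ i ∈ Finset.range b, ∫ x in c i..c (i+1), f ((a:ℝ)*x) * f ((b:ℝ)*x)| := by
          rw [hsum]
      _ ≤ ∑ i ∈ Finset.range b, |∫ x in c i..c (i+1), f ((a:ℝ)*x) * f ((b:ℝ)*x)| :=
          Finset.abs_sum_le_sum_abs _ _
      _ ≤ ∑ i ∈ Finset.range b, (V i).toReal * ((1/b)*A) :=
          Finset.sum_le_sum (fun i hi => hstep i (Finset.mem_range.mp hi))
      _ = (∑ i ∈ Finset.range b, (V i).toReal) * ((1/b)*A) := by rw [← Finset.sum_mul]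
      _ ≤ (2*a) * ((1/b)*L) := by
          apply mul_le_mul hVsum (mul_le_mul_of_nonneg_left hAL (by positivity))
            (by positivity) (by positivity)
      _ = 2 * a / b * L := by field_simp
  -- diagonal
  have diag : ∀ a : ℕ, 0 < a →
      (∫ x in (0:ℝ)..1, f ((a:ℝ) * x) * f ((a:ℝ) * x)) = I2 := by
    intro a ha
    have hg2meas : Measurable (fun x => f x * f x) := hmeas.mul hmeas
    have hg2bd : ∀ x, |f x * f x| ≤ B*B :=
      fun x => by rw [abs_mul]; exact mul_le_mul (hB _) (hB _) (abs_nonneg _) hB0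
    have hg2per : ∀ x : ℝ, f (x+1) * f (x+1) = f x * f x := fun x => by rw [hper]
    have hint2 : ∀ t₁ t₂ : ℝ, IntervalIntegrable (fun x => f ((a:ℝ)*x) * f ((a:ℝ)*x))
        volume t₁ t₂ :=
      fun _ _ => int_of_bdd ((hmeas.comp (measurable_const_mul _)).mul
        (hmeas.comp (measurable_const_mul _))) (B*B)
        (fun x => by simp only [Pi.mul_apply, Function.comp_apply]; rw [abs_mul]; exact mul_le_mul (hB _) (hB _) (abs_nonneg _) hB0) _ _
    have hsum := intervalIntegral.sum_integral_adjacent_intervals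
      (a := fun i : ℕ => (i:ℝ)/a) (μ := volume) (n := a) (fun k _ => hint2 _ _)
    simp only [Nat.cast_zero, zero_div] at hsum
    have hca : (a:ℝ)/a = 1 := by
      field_simp
    rw [hca] at hsum
    have hblk : ∀ i : ℕ, (∫ x in ((i:ℝ)/a)..(((i:ℝ)+1)/a), f ((a:ℝ)*x) * f ((a:ℝ)*x))
        = (1/a) * ∫ x in (0:ℝ)..1, f x * f x :=
      fun i => block_integral hg2meas (B*B) hg2bd hg2per ha i
    have hcast : ∀ i : ℕ, ((i+1 : ℕ):ℝ)/a = ((i:ℝ)+1)/a := by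
      intro i; push_cast; ring_nf
    have hsum2 : ∑ i ∈ Finset.range a,
        (∫ x in ((i:ℝ)/a)..(((i:ℕ)+1 : ℕ):ℝ)/a, f ((a:ℝ)*x) * f ((a:ℝ)*x))
        = ∑ i ∈ Finset.range a, (1/(a:ℝ)) * ∫ x in (0:ℝ)..1, f x * f x := by
      refine Finset.sum_congr rfl (fun i _ => ?_)
      rw [hcast i, hblk i]
    rw [hsum2] at hsum
    have hfin : ∫ x in (0:ℝ)..1, f x * f x = I2 := by
      rw [hI2def]
      exact intervalIntegral.integral_congr (fun x _ => (sq (f x)).symm)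
    rw [Finset.sum_const, Finset.card_range, nsmul_eq_mul, hfin] at hsum
    rw [← hsum]
    have : (a:ℝ) * (1/a * I2) = I2 := by
      field_simp
    rw [this]
  -- lacunarity growth
  have hq00 : (0:ℝ) < q := by linarith
  have hrat : ∀ m d : ℕ, q^d * (M m : ℝ) ≤ M (m + d) := by
    intro m d
    induction d with
    | zero => simp
    | succ d ih =>
      have h1 : q^(d+1) * (M m : ℝ) = q * (q^d * M m) := by ring
      rw [h1, show m + (d+1) = (m+d) + 1 from rfl]
      calc q * (q^d * (M m:ℝ)) ≤ q * (M (m+d) : ℝ) :=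
            mul_le_mul_of_nonneg_left ih hq00.le
        _ ≤ (M (m+d+1) : ℝ) := hMlac (m+d)
  set G : ℕ → ℕ → ℝ := fun m n => ∫ x in (0:ℝ)..1, f ((M m : ℝ)*x) * f ((M n : ℝ)*x)
    with hGdef
  have hGsymm : ∀ m n, G m n = G n m :=
    fun m n => intervalIntegral.integral_congr (fun x _ => mul_comm _ _)
  have hcross : ∀ m n : ℕ, m < n → |G m n| ≤ 2 * L * (1/q)^(n-m) := by
    intro m n hmn
    set d := n - m with hd
    have hnd : n = m + d := by omega
    have hd1 : 1 ≤ d := by omega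
    have hqd1 : (1:ℝ) ≤ q^d := one_le_pow₀ hq.le
    have hMn : q^d * (M m : ℝ) ≤ M n := by rw [hnd]; exact hrat m d
    have hMnR : (0:ℝ) < M n := Nat.cast_pos.mpr (hMpos n)
    have hMmR : (0:ℝ) < M m := Nat.cast_pos.mpr (hMpos m)
    have hMmn : (M m : ℝ) ≤ (M n : ℝ) := by nlinarith
    have h1 := corr (M m) (M n) (hMpos m) (hMpos n) (Nat.cast_le.mp hMmn)
    refine h1.trans ?_
    have h2 : (M m : ℝ) / (M n : ℝ) ≤ (1/q)^d := by
      have e : (1/q : ℝ)^d = 1/q^d := by rw [one_div, inv_pow, one_div]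
      rw [e, div_le_div_iff₀ hMnR (pow_pos hq00 d)]
      nlinarith
    calc 2 * (M m : ℝ) / (M n) * L = 2 * ((M m : ℝ)/(M n)) * L := by ring
      _ ≤ 2 * (1/q)^d * L := by
          apply mul_le_mul_of_nonneg_right (by linarith) hL
      _ = 2 * L * (1/q)^d := by ring
  -- expansion
  set S := Finset.Icc 1 N with hSdef
  have hprodint : ∀ m n : ℕ, IntervalIntegrable
      (fun x => f ((M m : ℝ)*x) * f ((M n : ℝ)*x)) volume 0 1 :=
    fun m n => int_of_bdd ((hmeas.comp (measurable_const_mul _)).mul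
      (hmeas.comp (measurable_const_mul _))) (B*B)
      (fun x => by simp only [Pi.mul_apply, Function.comp_apply]; rw [abs_mul]; exact mul_le_mul (hB _) (hB _) (abs_nonneg _) hB0) _ _
  have hexp : (∫ x in (0:ℝ)..1, (∑ n ∈ S, f ((M n : ℝ) * x)) ^ 2)
      = ∑ m ∈ S, ∑ n ∈ S, G m n := by
    have e : (fun x => (∑ n ∈ S, f ((M n : ℝ) * x)) ^ 2)
        = fun x => ∑ m ∈ S, ∑ n ∈ S, f ((M m : ℝ)*x) * f ((M n : ℝ)*x) := by
      funext x
      rw [sq, Finset.sum_mul_sum]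
    have hin : ∀ m, IntervalIntegrable
        (fun x => ∑ n ∈ S, f ((M m : ℝ)*x) * f ((M n : ℝ)*x)) volume 0 1 := by
      intro m
      have h := IntervalIntegrable.sum (μ := volume) (a := 0) (b := 1) S
        (f := fun n x => f ((M m : ℝ)*x) * f ((M n : ℝ)*x)) (fun n _ => hprodint m n)
      rw [Finset.sum_fn] at h
      exact h
    rw [e, intervalIntegral.integral_finset_sum (μ := volume)
      (f := fun m x => ∑ n ∈ S, f ((M m : ℝ)*x) * f ((M n : ℝ)*x))
      (fun m _ => hin m)]
    exact Finset.sum_congr rfl (fun m _ =>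
      intervalIntegral.integral_finset_sum (fun n _ => hprodint m n))
  -- geometric bound
  have hq1q : (0:ℝ) ≤ 1/q := by positivity
  have hq1q1 : 1/q < 1 := by rw [div_lt_one hq00]; exact hq
  have hgeo : ∑ d ∈ Finset.Icc 1 N, (1/q)^d ≤ 1/(q-1) := by
    refine (geom_tail (1/q) hq1q hq1q1 N).trans (le_of_eq ?_)
    have hne1 : (1:ℝ) - 1/q ≠ 0 := by
      have : (0:ℝ) < 1 - 1/q := by linarith
      exact this.ne'
    rw [div_eq_div_iff hne1 hq0.ne']
    field_simp
  -- off-diagonal sums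
  have hoff : ∀ m ∈ S, (∑ n ∈ S.erase m, |G m n|) ≤ 2 * L * (2/(q-1)) := by
    intro m hm
    have hmN : m ≤ N := (Finset.mem_Icc.mp hm).2
    have hm1 : 1 ≤ m := (Finset.mem_Icc.mp hm).1
    rw [← Finset.sum_filter_add_sum_filter_not (S.erase m) (fun n => n < m)]
    have hside : ∀ (T : Finset ℕ) (δ : ℕ → ℕ), (∀ n ∈ T, |G m n| ≤ 2*L*(1/q)^(δ n)) →
        (∀ x ∈ T, ∀ y ∈ T, δ x = δ y → x = y) → (∀ n ∈ T, δ n ∈ Finset.Icc 1 N) →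
        (∑ n ∈ T, |G m n|) ≤ 2*L*(1/(q-1)) := by
      intro T δ hbd hinj hsub
      calc ∑ n ∈ T, |G m n| ≤ ∑ n ∈ T, 2*L*(1/q)^(δ n) := Finset.sum_le_sum hbd
        _ = 2*L * ∑ n ∈ T, (1/q)^(δ n) := by rw [Finset.mul_sum]
        _ ≤ 2*L * (1/(q-1)) := by
            refine mul_le_mul_of_nonneg_left ?_ (by positivity)
            have h1 : ∑ n ∈ T, (1/q)^(δ n) = ∑ d ∈ T.image δ, (1/q)^d :=
              (Finset.sum_image (fun x hx y hy h => hinj x hx y hy h)).symm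
            rw [h1]
            refine le_trans (Finset.sum_le_sum_of_subset_of_nonneg ?_
              (fun d _ _ => by positivity)) hgeo
            intro d hd
            obtain ⟨n, hn, rfl⟩ := Finset.mem_image.mp hd
            exact hsub n hn
    have hT1 : (∑ n ∈ (S.erase m).filter (fun n => n < m), |G m n|) ≤ 2*L*(1/(q-1)) := by
      refine hside _ (fun n => m - n) ?_ ?_ ?_
      · intro n hn
        have hlt : n < m := (Finset.mem_filter.mp hn).2
        rw [hGsymm m n]
        exact hcross n m hlt
      · intro x hx y hy h
        have hx' : x < m := (Finset.mem_filter.mp hx).2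
        have hy' : y < m := (Finset.mem_filter.mp hy).2
        have h' : m - x = m - y := h
        omega
      · intro n hn
        have hlt : n < m := (Finset.mem_filter.mp hn).2
        have hn1 : 1 ≤ n := (Finset.mem_Icc.mp (Finset.mem_of_mem_erase
          (Finset.mem_filter.mp hn).1)).1
        simp only [Finset.mem_Icc]
        omega
    have hT2 : (∑ n ∈ (S.erase m).filter (fun n => ¬ n < m), |G m n|) ≤ 2*L*(1/(q-1)) := by
      refine hside _ (fun n => n - m) ?_ ?_ ?_
      · intro n hn
        have h1 := Finset.mem_filter.mp hn
        have hne : n ≠ m := Finset.ne_of_mem_erase h1.1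
        have hlt : m < n := by omega
        exact hcross m n hlt
      · intro x hx y hy h
        have hx' : ¬ x < m := (Finset.mem_filter.mp hx).2
        have hy' : ¬ y < m := (Finset.mem_filter.mp hy).2
        have h' : x - m = y - m := h
        omega
      · intro n hn
        have h1 := Finset.mem_filter.mp hn
        have hne : n ≠ m := Finset.ne_of_mem_erase h1.1
        have hnN : n ≤ N := (Finset.mem_Icc.mp (Finset.mem_of_mem_erase h1.1)).2
        have hge : ¬ n < m := h1.2
        simp only [Finset.mem_Icc]
        omega
    calc (∑ n ∈ (S.erase m).filter (fun n => n < m), |G m n|)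
          + (∑ n ∈ (S.erase m).filter (fun n => ¬ n < m), |G m n|)
        ≤ 2*L*(1/(q-1)) + 2*L*(1/(q-1)) := add_le_add hT1 hT2
      _ = 2*L*(2/(q-1)) := by ring
  -- assemble
  have hcard : S.card = N := by
    rw [hSdef, Nat.card_Icc]
    omega
  have hmain : ∑ m ∈ S, ∑ n ∈ S, G m n ≤ (I2 + 4*L/(q-1)) * N := by
    have hrow : ∀ m ∈ S, (∑ n ∈ S, G m n) ≤ I2 + 4*L/(q-1) := by
      intro m hm
      have h1 : G m m + ∑ n ∈ S.erase m, G m n = ∑ n ∈ S, G m n :=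
        Finset.add_sum_erase S (fun n => G m n) hm
      have h2 : (∑ n ∈ S.erase m, G m n) ≤ ∑ n ∈ S.erase m, |G m n| :=
        Finset.sum_le_sum (fun n _ => le_abs_self _)
      have h3 := (h2.trans (hoff m hm))
      have h4 : G m m = I2 := diag (M m) (hMpos m)
      have : (∑ n ∈ S, G m n) = I2 + ∑ n ∈ S.erase m, G m n := by rw [← h1, h4]
      rw [this]
      have h5 : 2*L*(2/(q-1)) = 4*L/(q-1) := by ring
      linarith [h5 ▸ h3]
    calc ∑ m ∈ S, ∑ n ∈ S, G m n ≤ ∑ m ∈ S, (I2 + 4*L/(q-1)) :=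
          Finset.sum_le_sum hrow
      _ = (I2 + 4*L/(q-1)) * N := by rw [Finset.sum_const, hcard, nsmul_eq_mul]; ring
  rw [hexp]
  refine hmain.trans ?_
  have hdiv : 0 < 4/(q-1) := by positivity
  have key : I2 + 4*L/(q-1) ≤ (1 + 4/(q-1)) * (I2 + L) := by
    have h1 : (1 + 4/(q-1)) * (I2 + L) = I2 + L + (4/(q-1))*I2 + (4/(q-1))*L := by ring
    have h2 : 4*L/(q-1) = (4/(q-1))*L := by ring
    rw [h1, h2]
    nlinarith
  have hN0 : (0:ℝ) ≤ N := Nat.cast_nonneg N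
  calc (I2 + 4*L/(q-1)) * N ≤ ((1 + 4/(q-1)) * (I2 + L)) * N :=
        mul_le_mul_of_nonneg_right key hN0
    _ = (1 + 4/(q-1)) * (I2 + L) * N := by ring
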